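/- Let λ ∈ ℝ \ {0}, let Ω ⊂ ℝ^d be convex, and let f : Ω → ℝ be such that (1/λ)(e^{λ f} − 1) is convex on Ω. If f is differentiable at u' ∈ Ω, then for every u ∈ Ω one has (1/λ) + ∇f(u')·(u − u') ≤ (1/λ)·e^{λ(f(u) − f(u'))}. Consequently the λ-logarithmic divergence satisfies L_{λ,f}[u : u'] ≥ 0 for all u ∈ Ω; moreover, if (1/λ)(e^{λ f} − 1) is strictly convex, then L_{λ,f}[u : u'] > 0 whenever u ≠ u'. -/

import Mathlib

open MeasureTheory Real
open scoped RealInnerProductSpace ENNReal BigOperators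

noncomputable section

/-- Tangent line inequality for convex functions. -/
lemma convex_tangent_le {E : Type*} [NormedAddCommGroup E] [NormedSpace ℝ E]
    {Ω : Set E} {g : E → ℝ} (hg : ConvexOn ℝ Ω g) {x y : E} (hx : x ∈ Ω) (hy : y ∈ Ω)
    {g' : E →L[ℝ] ℝ} (hd : HasFDerivAt g g' x) : g' (y - x) ≤ g y - g x := by
  set A : ℝ →ᵃ[ℝ] E := AffineMap.lineMap x y with hA
  have hAt : ∀ t : ℝ, A t = x + t • (y - x) := by
    intro t; simp [hA, AffineMap.lineMap_apply_module]; module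
  set φ : ℝ → ℝ := g ∘ A with hφ
  have hφc : ConvexOn ℝ (Set.Icc (0:ℝ) 1) φ := by
    refine (hg.comp_affineMap A).subset ?_ (convex_Icc 0 1)
    intro t ht
    simp only [Set.mem_preimage, hAt]
    have : x + t • (y - x) = (1 - t) • x + t • y := by module
    rw [this]
    exact hg.1 hx hy (by linarith [ht.1, ht.2]) ht.1 (by ring)
  have hAd : HasDerivAt (fun t : ℝ => A t) (y - x) 0 := by
    simp only [hAt]
    simpa using ((hasDerivAt_id (0:ℝ)).smul_const (y - x)).const_add x
  have hφd : HasDerivAt φ (g' (y - x)) 0 := by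
    have h0 : A 0 = x := by simp [hAt]
    have := (h0 ▸ hd).comp_hasDerivAt 0 hAd
    simpa [hφ] using this
  have := hφc.le_slope_of_hasDerivAt (by simp) (by simp) one_pos hφd
  have hs : slope φ 0 1 = g y - g x := by
    simp [slope, hφ, hAt]
  linarith [hs ▸ this]

/-- Strict tangent line inequality for strictly convex functions. -/
lemma strictConvex_tangent_lt {E : Type*} [NormedAddCommGroup E] [NormedSpace ℝ E]
    {Ω : Set E} {g : E → ℝ} (hg : StrictConvexOn ℝ Ω g) {x y : E} (hx : x ∈ Ω) (hy : y ∈ Ω)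
    (hne : y ≠ x) {g' : E →L[ℝ] ℝ} (hd : HasFDerivAt g g' x) : g' (y - x) < g y - g x := by
  set z : E := x + (1/2 : ℝ) • (y - x) with hz
  have hzmem : z ∈ Ω := by
    have : z = (1 - (1/2:ℝ)) • x + (1/2:ℝ) • y := by rw [hz]; module
    rw [this]
    exact hg.1 hx hy (by norm_num) (by norm_num) (by ring)
  have h1 : g' (z - x) ≤ g z - g x := convex_tangent_le hg.convexOn hx hzmem hd
  have h2 : g z < (1/2:ℝ) * g x + (1/2:ℝ) * g y := by
    have hzeq : z = (1/2:ℝ) • x + (1/2:ℝ) • y := by rw [hz]; module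
    have := hg.2 hx hy (fun h => hne h.symm) (by norm_num : (0:ℝ) < 1/2) (by norm_num : (0:ℝ) < 1/2) (by norm_num)
    simpa [hzeq, smul_eq_mul] using this
  have h3 : g' (z - x) = (1/2:ℝ) * g' (y - x) := by
    have h : z - x = (1/2:ℝ) • (y - x) := by rw [hz]; abel
    rw [h, g'.map_smul]; simp [smul_eq_mul]
  linarith


/-- Let `λ ≠ 0`, `Ω ⊆ ℝ^d` convex and `f : Ω → ℝ` with `(1/λ)(e^{λf} − 1)`
convex on `Ω`. If `f` is differentiable at `u' ∈ Ω`, then for every `u ∈ Ω`,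
`(1/λ) + ∇f(u')·(u − u') ≤ (1/λ)·e^{λ(f(u) − f(u'))}`. Consequently the λ-logarithmic
divergence `L_{λ,f}[u : u'] = f(u) − f(u') − (1/λ)·log(1 + λ∇f(u')·(u − u'))` is `≥ 0`
(in the case `1 + λ∇f(u')·(u − u') ≤ 0` it is `+∞ ≥ 0` by convention), and it is `> 0`
for `u ≠ u'` whenever `(1/λ)(e^{λf} − 1)` is strictly convex. -/
theorem lamLogDivergence_nonneg {d : ℕ} (lam : ℝ) (hlam : lam ≠ 0)
    (Ω : Set (EuclideanSpace ℝ (Fin d))) (hΩ : Convex ℝ Ω)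
    (f : EuclideanSpace ℝ (Fin d) → ℝ)
    (hconv : ConvexOn ℝ Ω (fun u => (1 / lam) * (Real.exp (lam * f u) - 1)))
    (u' : EuclideanSpace ℝ (Fin d)) (hu' : u' ∈ Ω)
    (hdiff : DifferentiableAt ℝ f u') :
    (∀ u ∈ Ω,
      1 / lam + ⟪gradient f u', u - u'⟫ ≤ (1 / lam) * Real.exp (lam * (f u - f u'))) ∧
    (∀ u ∈ Ω, 0 < 1 + lam * ⟪gradient f u', u - u'⟫ →
      0 ≤ f u - f u' - (1 / lam) * Real.log (1 + lam * ⟪gradient f u', u - u'⟫)) ∧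
    (StrictConvexOn ℝ Ω (fun u => (1 / lam) * (Real.exp (lam * f u) - 1)) →
      ∀ u ∈ Ω, u ≠ u' → 0 < 1 + lam * ⟪gradient f u', u - u'⟫ →
        0 < f u - f u' - (1 / lam) * Real.log (1 + lam * ⟪gradient f u', u - u'⟫)) := by
  set g : EuclideanSpace ℝ (Fin d) → ℝ := fun u => (1 / lam) * (Real.exp (lam * f u) - 1) with hg
  have hF : HasFDerivAt f (fderiv ℝ f u') u' := hdiff.hasFDerivAt
  have hinner : ∀ v, (fderiv ℝ f u') v = ⟪gradient f u', v⟫ := by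
    intro v
    have := hdiff.hasGradientAt.hasFDerivAt
    rw [this.fderiv]
    simp [InnerProductSpace.toDual_apply_apply]
  set G : EuclideanSpace ℝ (Fin d) →L[ℝ] ℝ := Real.exp (lam * f u') • (fderiv ℝ f u') with hG
  have hGd : HasFDerivAt g G u' := by
    have h1 := (hF.const_mul lam).exp
    have h2 := (h1.sub_const 1).const_mul (1/lam)
    have heq : (1/lam) • (Real.exp (lam * f u') • lam • fderiv ℝ f u') = G := by
      rw [hG, smul_smul, smul_smul]
      congr 1
      field_simp
    exact heq ▸ h2
  have hGv : ∀ v, G v = Real.exp (lam * f u') * ⟪gradient f u', v⟫ := by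
    intro v; rw [hG, ContinuousLinearMap.smul_apply, hinner v, smul_eq_mul]
  have hE : (0:ℝ) < Real.exp (lam * f u') := Real.exp_pos _
  -- first claim (with strict variant)
  have keyGen : ∀ u ∈ Ω, ∀ C : ℝ,
      Real.exp (lam * f u') * ⟪gradient f u', u - u'⟫ ≤ g u - g u' - C →
      1 / lam + ⟪gradient f u', u - u'⟫ + C / Real.exp (lam * f u')
        ≤ (1 / lam) * Real.exp (lam * (f u - f u')) := by
    intro u hu C h
    have hgu : g u - g u' = (1/lam) * (Real.exp (lam * f u) - Real.exp (lam * f u')) := by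
      rw [hg]; ring
    rw [hgu] at h
    have hexp : Real.exp (lam * (f u - f u')) = Real.exp (lam * f u) / Real.exp (lam * f u') := by
      rw [← Real.exp_sub]; ring_nf
    rw [hexp]
    have h2 : (1 / lam + ⟪gradient f u', u - u'⟫ + C / Real.exp (lam * f u')) * Real.exp (lam * f u')
        ≤ (1/lam) * Real.exp (lam * f u) := by
      have hC : C / Real.exp (lam * f u') * Real.exp (lam * f u') = C := by
        field_simp
      nlinarith [h, hE]
    calc 1 / lam + ⟪gradient f u', u - u'⟫ + C / Real.exp (lam * f u')
        = (1 / lam + ⟪gradient f u', u - u'⟫ + C / Real.exp (lam * f u'))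
            * Real.exp (lam * f u') / Real.exp (lam * f u') :=
          (mul_div_cancel_right₀ _ hE.ne').symm
      _ ≤ (1/lam) * Real.exp (lam * f u) / Real.exp (lam * f u') := by
          gcongr
      _ = 1 / lam * (Real.exp (lam * f u) / Real.exp (lam * f u')) := by ring
  have key : ∀ u ∈ Ω,
      1 / lam + ⟪gradient f u', u - u'⟫ ≤ (1 / lam) * Real.exp (lam * (f u - f u')) := by
    intro u hu
    have h := convex_tangent_le hconv hu' hu hGd
    rw [hGv] at h
    have := keyGen u hu 0 (by simpa using h)
    simpa using this
  -- from the key inequality (possibly strict) to nonnegativity of the divergence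
  have logstep : ∀ u ∈ Ω, 0 < 1 + lam * ⟪gradient f u', u - u'⟫ →
      (1 / lam + ⟪gradient f u', u - u'⟫ ≤ (1 / lam) * Real.exp (lam * (f u - f u'))) →
      0 ≤ f u - f u' - (1 / lam) * Real.log (1 + lam * ⟪gradient f u', u - u'⟫) := by
    intro u hu hpos hkey
    set P : ℝ := ⟪gradient f u', u - u'⟫
    rcases hlam.lt_or_gt with hneg | hposl
    · -- lam < 0 : multiply by lam flips
      have h1 : Real.exp (lam * (f u - f u')) ≤ 1 + lam * P := by
        have := mul_le_mul_of_nonpos_left hkey (le_of_lt hneg)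
        calc Real.exp (lam * (f u - f u')) = lam * ((1/lam) * Real.exp (lam * (f u - f u'))) := by
              field_simp
          _ ≤ lam * (1/lam + P) := this
          _ = 1 + lam * P := by field_simp
      have h2 : lam * (f u - f u') ≤ Real.log (1 + lam * P) :=
        (Real.le_log_iff_exp_le hpos).mpr h1
      have hinv : (1:ℝ)/lam < 0 := div_neg_of_pos_of_neg one_pos hneg
      have h3 : (1/lam) * Real.log (1 + lam * P) ≤ (1/lam) * (lam * (f u - f u')) :=
        mul_le_mul_of_nonpos_left h2 hinv.le
      have h4 : (1/lam) * (lam * (f u - f u')) = f u - f u' := by field_simp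
      linarith [h4 ▸ h3]
    · -- lam > 0
      have h1 : 1 + lam * P ≤ Real.exp (lam * (f u - f u')) := by
        have := mul_le_mul_of_nonneg_left hkey (le_of_lt hposl)
        calc 1 + lam * P = lam * (1/lam + P) := by field_simp
          _ ≤ lam * ((1/lam) * Real.exp (lam * (f u - f u'))) := this
          _ = Real.exp (lam * (f u - f u')) := by field_simp
      have h2 : Real.log (1 + lam * P) ≤ lam * (f u - f u') :=
        (Real.log_le_iff_le_exp hpos).mpr h1
      have h3 : (1/lam) * Real.log (1 + lam * P) ≤ (1/lam) * (lam * (f u - f u')) :=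
        mul_le_mul_of_nonneg_left h2 (le_of_lt (div_pos one_pos hposl))
      have h4 : (1/lam) * (lam * (f u - f u')) = f u - f u' := by field_simp
      linarith [h4 ▸ h3]
  refine ⟨key, fun u hu hpos => logstep u hu hpos (key u hu), ?_⟩
  -- strict case
  intro hstrict u hu hne hpos
  have h := strictConvex_tangent_lt hstrict hu' hu hne hGd
  rw [hGv] at h
  -- strict key: there is ε > 0 slack
  set C : ℝ := (g u - g u') - Real.exp (lam * f u') * ⟪gradient f u', u - u'⟫ with hC
  have hCpos : 0 < C := by rw [hC]; linarith
  have hkeyC := keyGen u hu C (by rw [hC]; ring_nf; exact le_refl _)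
  have hkey : 1 / lam + ⟪gradient f u', u - u'⟫ < (1 / lam) * Real.exp (lam * (f u - f u')) := by
    have : 0 < C / Real.exp (lam * f u') := div_pos hCpos hE
    linarith
  -- now strict version of logstep
  set P : ℝ := ⟪gradient f u', u - u'⟫
  rcases hlam.lt_or_gt with hneg | hposl
  · have h1 : Real.exp (lam * (f u - f u')) < 1 + lam * P := by
      have := mul_lt_mul_of_neg_left hkey hneg
      calc Real.exp (lam * (f u - f u')) = lam * ((1/lam) * Real.exp (lam * (f u - f u'))) := by
            field_simp
        _ < lam * (1/lam + P) := this
        _ = 1 + lam * P := by field_simp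
    have h2 : lam * (f u - f u') < Real.log (1 + lam * P) :=
      (Real.lt_log_iff_exp_lt hpos).mpr h1
    have hinv : (1:ℝ)/lam < 0 := div_neg_of_pos_of_neg one_pos hneg
    have h3 : (1/lam) * Real.log (1 + lam * P) < (1/lam) * (lam * (f u - f u')) :=
      mul_lt_mul_of_neg_left h2 hinv
    have h4 : (1/lam) * (lam * (f u - f u')) = f u - f u' := by field_simp
    linarith [h4 ▸ h3]
  · have h1 : 1 + lam * P < Real.exp (lam * (f u - f u')) := by
      have := mul_lt_mul_of_pos_left hkey hposl
      calc 1 + lam * P = lam * (1/lam + P) := by field_simp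
        _ < lam * ((1/lam) * Real.exp (lam * (f u - f u'))) := this
        _ = Real.exp (lam * (f u - f u')) := by field_simp
    have h2 : Real.log (1 + lam * P) < lam * (f u - f u') :=
      (Real.log_lt_iff_lt_exp hpos).mpr h1
    have h3 : (1/lam) * Real.log (1 + lam * P) < (1/lam) * (lam * (f u - f u')) :=
      mul_lt_mul_of_pos_left h2 (div_pos one_pos hposl)
    have h4 : (1/lam) * (lam * (f u - f u')) = f u - f u' := by field_simp
    linarith [h4 ▸ h3]

end
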